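/- Let T > 0 and let U : [0,T] → ℝ be continuous. Then the following are equivalent: (a) U is welded on [0,T]; (b) for every τ ∈ [0,T) there exists ε > 0 such that for every x₀ ∈ ℝ with x₀ ≠ U(τ) there is a function x : [τ,T] → ℝ with x(τ) = x₀, x(t) ≠ U(t) for all t ∈ [τ,T], x differentiable with x'(t) = 2/(x(t) − U(t)) for all t ∈ [τ,T], and |x(T) − U(T)| > ε. -/

import Mathlib

open Set Filter Topology intervalIntegral

/-- A backward solution of the backward chordal Loewner equation on `[0,s)` for the
driving function `U : [0,T] → ℝ`. -/
def IsBackwardSol (U : ℝ → ℝ) (T s : ℝ) (x : ℝ → ℝ) : Prop :=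
  ∀ t ∈ Set.Ico (0 : ℝ) s, x t ≠ U (T - t) ∧
    HasDerivWithinAt x (-2 / (x t - U (T - t))) (Set.Ico 0 s) t

/-- The backward solution `x` hits the singularity at time `s`. -/
def HitsSingularity (U : ℝ → ℝ) (T s : ℝ) (x : ℝ → ℝ) : Prop :=
  Filter.Tendsto x (nhdsWithin s (Set.Iio s)) (nhds (U (T - s)))

/-- The driving function `U` is welded on `[0,T]`: for every `s ∈ (0,T]` there are
exactly two initial values whose backward solutions hit the singularity at time `s`,
and they straddle `U T`. -/
def Welded (U : ℝ → ℝ) (T : ℝ) : Prop :=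
  ∀ s ∈ Set.Ioc (0 : ℝ) T, ∃ x₀ y₀ : ℝ, x₀ < U T ∧ U T < y₀ ∧
    {a : ℝ | ∃ x : ℝ → ℝ, x 0 = a ∧ IsBackwardSol U T s x ∧ HitsSingularity U T s x}
      = {x₀, y₀}

/-- Sign propagation: a continuous nonvanishing difference keeps its sign on an
order-connected set. -/
lemma lw_sign {s : Set ℝ} (hs : s.OrdConnected) {f : ℝ → ℝ}
    (hf : ContinuousOn f s) (hne : ∀ t ∈ s, f t ≠ 0) {p q : ℝ} (hp : p ∈ s) (hq : q ∈ s)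
    (hfp : 0 < f p) : 0 < f q := by
  rcases lt_or_gt_of_ne (hne q hq) with h | h
  · exfalso
    have hsub : uIcc q p ⊆ s := hs.uIcc_subset hq hp
    have : (0 : ℝ) ∈ f '' (uIcc q p) := by
      apply intermediate_value_uIcc (hf.mono hsub)
      exact mem_uIcc.2 (Or.inl ⟨h.le, hfp.le⟩)
    obtain ⟨t, ht, ht0⟩ := this
    exact hne t (hsub ht) ht0
  · exact h

/-- FTC wrapper: an antiderivative of a function continuous on `Icc a b`. -/
lemma lw_ftc {a b : ℝ} (hab : a ≤ b) {c : ℝ → ℝ} (hc : ContinuousOn c (Icc a b)) :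
    ∃ C : ℝ → ℝ, C a = 0 ∧ (∀ t ∈ Icc a b, HasDerivWithinAt C (c t) (Icc a b) t) ∧
      ((∀ u ∈ Icc a b, c u ≤ 0) → ∀ t ∈ Icc a b, C t ≤ 0) := by
  set proj : ℝ → ℝ := fun t => max a (min t b) with hproj
  have hprojmem : ∀ t, proj t ∈ Icc a b := by
    intro t
    refine ⟨le_max_left _ _, max_le (hab) (min_le_right _ _)⟩
  have hprojcont : Continuous proj := continuous_const.max (continuous_id.min continuous_const)
  have hproj_eq : ∀ t ∈ Icc a b, proj t = t := by
    intro t ht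
    simp only [hproj]
    rw [min_eq_left ht.2, max_eq_right ht.1]
  set ct : ℝ → ℝ := fun t => c (proj t) with hct
  have hctc : Continuous ct := hc.comp_continuous hprojcont hprojmem
  refine ⟨fun t => ∫ u in a..t, ct u, by simp, ?_, ?_⟩
  · intro t ht
    have h1 : HasDerivAt (fun t => ∫ u in a..t, ct u) (ct t) t :=
      integral_hasDerivAt_right (hctc.intervalIntegrable _ _)
        (hctc.stronglyMeasurable.stronglyMeasurableAtFilter) hctc.continuousAt
    have := h1.hasDerivWithinAt (s := Icc a b)
    rwa [show ct t = c t by simp only [hct, hproj_eq t ht]] at this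
  · intro hcle t ht
    have := intervalIntegral.integral_mono_on (f := ct) (g := fun _ => (0:ℝ)) ht.1
      (hctc.intervalIntegrable _ _) (intervalIntegrable_const (μ := MeasureTheory.volume))
      (fun u _ => hcle (proj u) (hprojmem u))
    simpa using this

/-- Continuity of a solution. -/
lemma lw_cont {s : Set ℝ} {x : ℝ → ℝ} {f : ℝ → ℝ}
    (hx : ∀ t ∈ s, HasDerivWithinAt x (f t) s t) : ContinuousOn x s :=
  fun t ht => (hx t ht).continuousWithinAt

/-- The fundamental identity for the difference of two forward Loewner solutions. -/
lemma lw_identity {U : ℝ → ℝ} {a b : ℝ} (hab : a ≤ b)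
    (hUc : ContinuousOn U (Icc a b)) {x y : ℝ → ℝ}
    (hx : ∀ t ∈ Icc a b, x t ≠ U t ∧ HasDerivWithinAt x (2 / (x t - U t)) (Icc a b) t)
    (hy : ∀ t ∈ Icc a b, y t ≠ U t ∧ HasDerivWithinAt y (2 / (y t - U t)) (Icc a b) t) :
    ∃ C : ℝ → ℝ, (∀ t ∈ Icc a b, y t - x t = (y a - x a) * Real.exp (C t)) ∧
      ((∀ t ∈ Icc a b, U t < x t) → (∀ t ∈ Icc a b, U t < y t) →
        ∀ t ∈ Icc a b, C t ≤ 0) := by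
  set c : ℝ → ℝ := fun t => -2 / ((x t - U t) * (y t - U t)) with hc
  have hxc : ContinuousOn x (Icc a b) := lw_cont (fun t ht => (hx t ht).2)
  have hyc : ContinuousOn y (Icc a b) := lw_cont (fun t ht => (hy t ht).2)
  have hcc : ContinuousOn c (Icc a b) := by
    apply ContinuousOn.div continuousOn_const
    · exact ((hxc.sub hUc).mul (hyc.sub hUc))
    · intro t ht
      exact mul_ne_zero (sub_ne_zero.2 (hx t ht).1) (sub_ne_zero.2 (hy t ht).1)
  obtain ⟨C, hCa, hCd, hCnp⟩ := lw_ftc hab hcc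
  set g : ℝ → ℝ := fun t => (y t - x t) * Real.exp (-C t) with hg
  have hgd : ∀ t ∈ Icc a b, HasDerivWithinAt g 0 (Icc a b) t := by
    intro t ht
    have h1 : HasDerivWithinAt (fun t => y t - x t)
        (2 / (y t - U t) - 2 / (x t - U t)) (Icc a b) t := ((hy t ht).2).sub ((hx t ht).2)
    have h2 : HasDerivWithinAt (fun t => Real.exp (-C t))
        (Real.exp (-C t) * (-c t)) (Icc a b) t := ((hCd t ht).neg).exp
    have h3 := h1.mul h2
    refine HasDerivWithinAt.congr_deriv h3 ?_
    have hxne : x t - U t ≠ 0 := sub_ne_zero.2 (hx t ht).1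
    have hyne : y t - U t ≠ 0 := sub_ne_zero.2 (hy t ht).1
    have key : 2 / (y t - U t) - 2 / (x t - U t) = c t * (y t - x t) := by
      simp only [hc]
      field_simp
      ring
    rw [key]
    ring
  have hgc : ContinuousOn g (Icc a b) := lw_cont hgd
  have hconst : ∀ t ∈ Icc a b, g t = g a := by
    apply constant_of_has_deriv_right_zero hgc
    intro t ht
    exact (hgd t (Ico_subset_Icc_self ht)).mono_of_mem_nhdsWithin (Icc_mem_nhdsGE_of_mem ht)
  refine ⟨C, ?_, fun hxa hya t ht => hCnp (fun u hu => ?_) t ht⟩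
  · intro t ht
    have h := hconst t ht
    simp only [hg, hCa, neg_zero, Real.exp_zero, mul_one] at h
    have hene : Real.exp (-C t) ≠ 0 := Real.exp_ne_zero _
    rw [Real.exp_neg] at h
    field_simp at h
    rw [h]; ring
  · have h1 : 0 < (x u - U u) * (y u - U u) :=
      mul_pos (sub_pos.2 (hxa u hu)) (sub_pos.2 (hya u hu))
    simp only [hc]
    exact div_nonpos_of_nonpos_of_nonneg (by norm_num) h1.le

/-- Order preservation for forward Loewner solutions. -/
lemma lw_compare {U : ℝ → ℝ} {a b : ℝ} (hab : a ≤ b)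
    (hUc : ContinuousOn U (Icc a b)) {x y : ℝ → ℝ}
    (hx : ∀ t ∈ Icc a b, x t ≠ U t ∧ HasDerivWithinAt x (2 / (x t - U t)) (Icc a b) t)
    (hy : ∀ t ∈ Icc a b, y t ≠ U t ∧ HasDerivWithinAt y (2 / (y t - U t)) (Icc a b) t)
    (hlt : x a < y a) : ∀ t ∈ Icc a b, x t < y t := by
  obtain ⟨C, hid, -⟩ := lw_identity hab hUc hx hy
  intro t ht
  have := hid t ht
  nlinarith [Real.exp_pos (C t), sub_pos.2 hlt]

/-- Contraction for two solutions above the driving function. -/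
lemma lw_contract {U : ℝ → ℝ} {a b : ℝ} (hab : a ≤ b)
    (hUc : ContinuousOn U (Icc a b)) {x y : ℝ → ℝ}
    (hx : ∀ t ∈ Icc a b, x t ≠ U t ∧ HasDerivWithinAt x (2 / (x t - U t)) (Icc a b) t)
    (hy : ∀ t ∈ Icc a b, y t ≠ U t ∧ HasDerivWithinAt y (2 / (y t - U t)) (Icc a b) t)
    (hxa : ∀ t ∈ Icc a b, U t < x t) (hya : ∀ t ∈ Icc a b, U t < y t) :
    ∀ t ∈ Icc a b, |y t - x t| ≤ |y a - x a| := by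
  obtain ⟨C, hid, hC⟩ := lw_identity hab hUc hx hy
  intro t ht
  rw [hid t ht, abs_mul, Real.abs_exp]
  calc |y a - x a| * Real.exp (C t) ≤ |y a - x a| * 1 := by
        apply mul_le_mul_of_nonneg_left _ (abs_nonneg _)
        exact Real.exp_le_one_iff.2 (hC hxa hya t ht)
    _ = |y a - x a| := mul_one _

/-- Picard–Lindelöf existence for the clamped Loewner field. -/
lemma lw_exists_clamped {U L : ℝ → ℝ} {a b m : ℝ} (hab : a ≤ b) (hm : 0 < m)
    (hUc : ContinuousOn U (Icc a b)) (hLc : ContinuousOn L (Icc a b))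
    (hsep : ∀ t ∈ Icc a b, U t + m ≤ L t) (x₀ : ℝ) :
    ∃ z : ℝ → ℝ, z a = x₀ ∧
      ∀ t ∈ Icc a b, HasDerivWithinAt z (2 / (max (z t) (L t) - U t)) (Icc a b) t := by
  set v : ℝ → ℝ → ℝ := fun t x => 2 / (max x (L t) - U t) with hv
  have hden : ∀ t ∈ Icc a b, ∀ x : ℝ, m ≤ max x (L t) - U t := by
    intro t ht x
    have h1 : U t + m ≤ L t := hsep t ht
    have h2 : L t ≤ max x (L t) := le_max_right _ _
    linarith
  have hpl : IsPicardLindelof v (tmin := a) (tmax := b) ⟨a, left_mem_Icc.2 hab⟩ x₀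
      ⟨2 / m * (b - a) + 1, by
        have : (0:ℝ) ≤ 2 / m * (b - a) := mul_nonneg (by positivity) (by linarith)
        linarith⟩ 0 ⟨2 / m, by positivity⟩ ⟨2 / m ^ 2, by positivity⟩ := by
    constructor
    · intro t ht
      apply LipschitzWith.lipschitzOnWith
      apply LipschitzWith.of_dist_le_mul
      intro p q
      simp only [Real.dist_eq, hv, NNReal.coe_mk]
      set A := max p (L t) - U t with hA
      set B := max q (L t) - U t with hB
      have hAm : m ≤ A := hden t ht p
      have hBm : m ≤ B := hden t ht q
      have hA0 : (0:ℝ) < A := lt_of_lt_of_le hm hAm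
      have hB0 : (0:ℝ) < B := lt_of_lt_of_le hm hBm
      have habs : |B - A| ≤ |p - q| := by
        have : B - A = -(max p (L t) - max q (L t)) := by rw [hA, hB]; ring
        rw [this, abs_neg]
        exact abs_max_sub_max_le_abs _ _ _
      have heq : 2 / A - 2 / B = 2 * (B - A) / (A * B) := by
        field_simp
      rw [heq, abs_div, abs_mul, abs_two, abs_of_pos (mul_pos hA0 hB0)]
      rw [div_le_iff₀ (mul_pos hA0 hB0)]
      have hm2 : m ^ 2 ≤ A * B := by nlinarith
      have h5 : 2 * |p - q| = 2 / m ^ 2 * |p - q| * m ^ 2 := by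
        field_simp
      have h6 : 2 / m ^ 2 * |p - q| * m ^ 2 ≤ 2 / m ^ 2 * |p - q| * (A * B) := by
        apply mul_le_mul_of_nonneg_left hm2 (by positivity)
      change 2 * |B - A| ≤ 2 / m ^ 2 * |p - q| * (A * B)
      nlinarith [habs, abs_nonneg (p - q)]
    · intro x _
      apply ContinuousOn.div continuousOn_const
      · exact (continuousOn_const.sup hLc).sub hUc
      · intro t ht
        have := hden t ht x
        linarith
    · intro t ht x _
      have hd := hden t ht x
      have hd0 : (0:ℝ) < max x (L t) - U t := lt_of_lt_of_le hm hd
      rw [Real.norm_eq_abs, abs_div, abs_two, abs_of_pos hd0]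
      exact div_le_div_of_nonneg_left (by norm_num) hm hd
    · show (2 / m) * max (b - a) (a - a) ≤ (2 / m * (b - a) + 1) - 0
      have : (2 / m) * max (b - a) (a - a) = 2 / m * (b - a) := by
        rw [sub_self, max_eq_left (by linarith)]
      rw [this]
      linarith
  obtain ⟨f, hf0, hfd⟩ := hpl.exists_eq_forall_mem_Icc_hasDerivWithinAt₀
  exact ⟨f, hf0, hfd⟩

/-- A forward solution started strictly above another forward solution stays above it,
and is in particular a genuine solution. -/
lemma lw_stay_above {U X : ℝ → ℝ} {a b : ℝ} (hab : a ≤ b)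
    (hUc : ContinuousOn U (Icc a b))
    (hX : ∀ t ∈ Icc a b, X t ≠ U t ∧ HasDerivWithinAt X (2 / (X t - U t)) (Icc a b) t)
    (hXU : ∀ t ∈ Icc a b, U t < X t) {x₀ : ℝ} (hx₀ : X a < x₀) :
    ∃ z : ℝ → ℝ, z a = x₀ ∧ (∀ t ∈ Icc a b, X t < z t) ∧
      ∀ t ∈ Icc a b, z t ≠ U t ∧ HasDerivWithinAt z (2 / (z t - U t)) (Icc a b) t := by
  have hXc : ContinuousOn X (Icc a b) := lw_cont (fun t ht => (hX t ht).2)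
  obtain ⟨tm, htm, hmin⟩ := isCompact_Icc.exists_isMinOn (nonempty_Icc.2 hab) (hXc.sub hUc)
  set m : ℝ := X tm - U tm with hmdef
  have hm : 0 < m := sub_pos.2 (hXU tm htm)
  have hsep : ∀ t ∈ Icc a b, U t + m ≤ X t := by
    intro t ht
    have := hmin ht
    simp only [mem_setOf_eq, Pi.sub_apply] at this
    linarith [this]
  obtain ⟨z, hz0, hzd⟩ := lw_exists_clamped hab hm hUc hXc hsep x₀
  have hzc : ContinuousOn z (Icc a b) := lw_cont hzd
  have key : ∀ t ∈ Icc a b, X t < z t := by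
    by_contra hcon
    push_neg at hcon
    obtain ⟨tw, htw, htwle⟩ := hcon
    set A : Set ℝ := {t | t ∈ Icc a b ∧ z t ≤ X t} with hA
    have hAne : A.Nonempty := ⟨tw, htw, htwle⟩
    have hAclosed : IsClosed A := by
      have : A = Icc a b ∩ (fun t => z t - X t) ⁻¹' (Iic 0) := by
        ext t
        simp only [hA, mem_setOf_eq, mem_inter_iff, mem_preimage, mem_Iic, sub_nonpos]
      rw [this]
      exact (hzc.sub hXc).preimage_isClosed_of_isClosed isClosed_Icc isClosed_Iic
    have hAbdd : BddBelow A := ⟨a, fun t ht => ht.1.1⟩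
    set t₀ : ℝ := sInf A with ht₀def
    have ht₀A : t₀ ∈ A := hAclosed.csInf_mem hAne hAbdd
    have ht₀I : t₀ ∈ Icc a b := ht₀A.1
    have hat₀ : a < t₀ := by
      rcases lt_or_eq_of_le ht₀I.1 with h | h
      · exact h
      · exfalso
        have : z a ≤ X a := by rw [h]; exact ht₀A.2
        rw [hz0] at this
        linarith
    have hlt : ∀ t ∈ Icc a b, t < t₀ → X t < z t := by
      intro t ht htlt
      by_contra hle
      push_neg at hle
      exact absurd (csInf_le hAbdd ⟨ht, hle⟩) (not_le.2 htlt)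
    have hzX0 : 0 ≤ z t₀ - X t₀ := by
      have htt : Tendsto (fun u => z u - X u) (𝓝[Ioo a t₀] t₀) (𝓝 (z t₀ - X t₀)) := by
        have h1 : ContinuousWithinAt (fun u => z u - X u) (Icc a b) t₀ := (hzc.sub hXc) t₀ ht₀I
        exact h1.tendsto.mono_left (nhdsWithin_mono _
          (fun u hu => ⟨hu.1.le, hu.2.le.trans ht₀I.2⟩))
      have hnb : (𝓝[Ioo a t₀] t₀).NeBot := right_nhdsWithin_Ioo_neBot hat₀
      have hev : ∀ u ∈ Ioo a t₀, 0 ≤ z u - X u := by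
        intro u hu
        have := hlt u ⟨hu.1.le, le_trans hu.2.le ht₀I.2⟩ hu.2
        linarith
      exact ge_of_tendsto htt (eventually_nhdsWithin_of_forall hev)
    have hge : ∀ t ∈ Icc a t₀, X t ≤ z t := by
      intro t ht
      rcases lt_or_eq_of_le ht.2 with h | h
      · exact (hlt t ⟨ht.1, le_trans ht.2 ht₀I.2⟩ h).le
      · rw [h]
        linarith
    exfalso
    have hzsol : ∀ t ∈ Icc a t₀, z t ≠ U t ∧
        HasDerivWithinAt z (2 / (z t - U t)) (Icc a t₀) t := by
      intro t ht
      have htI : t ∈ Icc a b := ⟨ht.1, le_trans ht.2 ht₀I.2⟩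
      have h1 := hzd t htI
      rw [max_eq_left (hge t ht)] at h1
      refine ⟨?_, h1.mono (Icc_subset_Icc le_rfl ht₀I.2)⟩
      have hu1 := hXU t htI
      have hu2 := hge t ht
      intro heq
      rw [heq] at hu2
      linarith
    have hXsol : ∀ t ∈ Icc a t₀, X t ≠ U t ∧
        HasDerivWithinAt X (2 / (X t - U t)) (Icc a t₀) t := by
      intro t ht
      have htI : t ∈ Icc a b := ⟨ht.1, le_trans ht.2 ht₀I.2⟩
      exact ⟨(hX t htI).1, (hX t htI).2.mono (Icc_subset_Icc le_rfl ht₀I.2)⟩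
    have := lw_compare hat₀.le (hUc.mono (Icc_subset_Icc le_rfl ht₀I.2)) hXsol hzsol
      (by rw [hz0]; exact hx₀) t₀ (right_mem_Icc.2 hat₀.le)
    have h2 := ht₀A.2
    linarith
  refine ⟨z, hz0, key, fun t ht => ?_⟩
  have h1 := hzd t ht
  rw [max_eq_left (key t ht).le] at h1
  refine ⟨?_, h1⟩
  have h2 := hXU t ht
  have h3 := key t ht
  intro heq
  rw [heq] at h3
  linarith

/-- Short-time existence above a constant barrier dominating the driving function. -/
lemma lw_local {U : ℝ → ℝ} {a b k m : ℝ} (hab : a ≤ b) (hm : 0 < m)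
    (hUc : ContinuousOn U (Icc a b)) (hk : ∀ t ∈ Icc a b, U t + m ≤ k)
    {x₀ : ℝ} (hx₀ : k < x₀) :
    ∃ z : ℝ → ℝ, z a = x₀ ∧ (∀ t ∈ Icc a b, x₀ ≤ z t ∧ k < z t) ∧
      ∀ t ∈ Icc a b, z t ≠ U t ∧ HasDerivWithinAt z (2 / (z t - U t)) (Icc a b) t := by
  obtain ⟨z, hz0, hzd⟩ := lw_exists_clamped hab hm hUc continuousOn_const hk x₀
  have hzc : ContinuousOn z (Icc a b) := lw_cont hzd
  have hmono : MonotoneOn z (Icc a b) := by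
    have := strictMonoOn_of_hasDerivWithinAt_pos (convex_Icc a b) hzc
      (f' := fun t => 2 / (max (z t) k - U t))
      (fun t ht => (hzd t (interior_subset ht)).mono interior_subset) ?_
    · exact this.monotoneOn
    · intro t ht
      have htI : t ∈ Icc a b := interior_subset ht
      have h1 : U t + m ≤ k := hk t htI
      have h2 : k ≤ max (z t) k := le_max_right _ _
      have : 0 < max (z t) k - U t := by linarith
      positivity
  have hup : ∀ t ∈ Icc a b, x₀ ≤ z t ∧ k < z t := by
    intro t ht
    have h1 : z a ≤ z t := hmono (left_mem_Icc.2 hab) ht ht.1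
    rw [hz0] at h1
    exact ⟨h1, lt_of_lt_of_le hx₀ h1⟩
  refine ⟨z, hz0, hup, fun t ht => ?_⟩
  have h1 := hzd t ht
  have h2 := hup t ht
  rw [max_eq_left h2.2.le] at h1
  refine ⟨?_, h1⟩
  have h3 := hk t ht
  intro heq
  rw [heq] at h2
  linarith [h2.2]

/-- Gluing two forward solutions at a common time. -/
lemma lw_glue {U : ℝ → ℝ} {a c b : ℝ} (hac : a ≤ c) (hcb : c ≤ b) {x y : ℝ → ℝ}
    (hxy : x c = y c)
    (hx : ∀ t ∈ Icc a c, x t ≠ U t ∧ HasDerivWithinAt x (2 / (x t - U t)) (Icc a c) t)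
    (hy : ∀ t ∈ Icc c b, y t ≠ U t ∧ HasDerivWithinAt y (2 / (y t - U t)) (Icc c b) t) :
    ∀ t ∈ Icc a b, (fun u => if u ≤ c then x u else y u) t ≠ U t ∧
      HasDerivWithinAt (fun u => if u ≤ c then x u else y u)
        (2 / ((fun u => if u ≤ c then x u else y u) t - U t)) (Icc a b) t := by
  set z : ℝ → ℝ := fun u => if u ≤ c then x u else y u with hz
  have hzx : ∀ u ∈ Icc a c, z u = x u := fun u hu => if_pos hu.2
  have hzy : ∀ u ∈ Icc c b, z u = y u := by
    intro u hu
    by_cases h : u ≤ c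
    · have : u = c := le_antisymm h hu.1
      simp only [hz, this, if_pos (le_refl c), hxy]
    · exact if_neg h
  have hdx : ∀ t ∈ Icc a c, HasDerivWithinAt z (2 / (z t - U t)) (Icc a c) t := by
    intro t ht
    have h := (hx t ht).2
    have h2 := h.congr hzx (hzx t ht)
    rwa [← hzx t ht] at h2
  have hdy : ∀ t ∈ Icc c b, HasDerivWithinAt z (2 / (z t - U t)) (Icc c b) t := by
    intro t ht
    have h := (hy t ht).2
    have h2 := h.congr hzy (hzy t ht)
    rwa [← hzy t ht] at h2
  intro t ht
  rcases lt_trichotomy t c with h | h | h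
  · have htac : t ∈ Icc a c := ⟨ht.1, h.le⟩
    constructor
    · rw [hzx t htac]; exact (hx t htac).1
    · apply (hdx t htac).mono_of_mem_nhdsWithin
      apply mem_nhdsWithin.2 ⟨Iio c, isOpen_Iio, h, ?_⟩
      intro u hu
      exact ⟨hu.2.1, hu.1.le⟩
  · subst h
    constructor
    · rw [hzx t ⟨ht.1, le_rfl⟩]; exact (hx t ⟨ht.1, le_rfl⟩).1
    · have h1 := hdx t ⟨ht.1, le_rfl⟩
      have h2 := hdy t ⟨le_rfl, ht.2⟩
      have := h1.union h2
      rwa [Set.Icc_union_Icc_eq_Icc ht.1 ht.2] at this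
  · have htcb : t ∈ Icc c b := ⟨h.le, ht.2⟩
    constructor
    · rw [hzy t htcb]; exact (hy t htcb).1
    · apply (hdy t htcb).mono_of_mem_nhdsWithin
      apply mem_nhdsWithin.2 ⟨Ioi c, isOpen_Ioi, h, ?_⟩
      intro u hu
      exact ⟨hu.1.le, hu.2.2⟩

/-- Given an emanating solution `X` above the driving function starting at `(τ, U τ)`,
every forward solution started above `U τ` exists up to time `T` and ends above `X T`. -/
lemma lw_forward_above {U : ℝ → ℝ} {T τ : ℝ} (hτ0 : 0 ≤ τ) (hτT : τ < T)
    (hU : ContinuousOn U (Icc 0 T)) {X : ℝ → ℝ}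
    (hX : ∀ u ∈ Ioc τ T, U u < X u ∧ HasDerivWithinAt X (2 / (X u - U u)) (Ioc τ T) u)
    (hXt : Tendsto X (𝓝[>] τ) (𝓝 (U τ)))
    {x₀ : ℝ} (hx₀ : U τ < x₀) :
    ∃ z : ℝ → ℝ, z τ = x₀ ∧
      (∀ t ∈ Icc τ T, z t ≠ U t ∧ HasDerivWithinAt z (2 / (z t - U t)) (Icc τ T) t) ∧
      X T < z T := by
  set d : ℝ := (x₀ - U τ) / 4 with hd
  have hd0 : 0 < d := by simp only [hd]; linarith
  -- continuity of U at τ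
  have hUτ : ContinuousWithinAt U (Icc 0 T) τ := hU τ ⟨hτ0, hτT.le⟩
  rw [Metric.continuousWithinAt_iff] at hUτ
  obtain ⟨δ, hδ0, hδ⟩ := hUτ d hd0
  -- choose t₁
  have hev1 : ∀ᶠ u in 𝓝[>] τ, |X u - U τ| < d := by
    have := hXt (Metric.ball_mem_nhds (U τ) hd0)
    filter_upwards [this] with u hu
    simpa [Real.dist_eq] using hu
  have hc : τ < min (τ + δ) T := lt_min (by linarith) hτT
  have hev2 : Ioo τ (min (τ + δ) T) ∈ 𝓝[>] τ := Ioo_mem_nhdsGT_of_mem ⟨le_refl τ, hc⟩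
  obtain ⟨t₁, ht₁X, ht₁mem⟩ := (hev1.and (eventually_of_mem hev2 (fun u hu => hu))).exists
  have hτt₁ : τ < t₁ := ht₁mem.1
  have ht₁δ : t₁ < τ + δ := lt_of_lt_of_le ht₁mem.2 (min_le_left _ _)
  have ht₁T : t₁ < T := lt_of_lt_of_le ht₁mem.2 (min_le_right _ _)
  have hUnear : ∀ t ∈ Icc τ t₁, U t < U τ + d := by
    intro t ht
    have htI : t ∈ Icc 0 T := ⟨le_trans hτ0 ht.1, le_trans ht.2 ht₁T.le⟩
    have : dist t τ < δ := by
      rw [Real.dist_eq, abs_of_nonneg (by linarith [ht.1] : (0:ℝ) ≤ t - τ)]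
      linarith [ht.2]
    have := hδ htI this
    rw [Real.dist_eq] at this
    cases' abs_lt.1 this with h1 h2
    linarith
  -- phase 1 : on [τ, t₁]
  have hUc1 : ContinuousOn U (Icc τ t₁) :=
    hU.mono (Icc_subset_Icc hτ0 ht₁T.le)
  obtain ⟨z₁, hz₁0, hz₁up, hz₁sol⟩ := lw_local (U := U) (k := U τ + 2 * d) (m := d)
    hτt₁.le hd0 hUc1 (fun t ht => by linarith [hUnear t ht]) (by linarith : U τ + 2*d < x₀)
  -- phase 2 : on [t₁, T]
  have hsub2 : Icc t₁ T ⊆ Ioc τ T := fun u hu => ⟨lt_of_lt_of_le hτt₁ hu.1, hu.2⟩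
  have hX2 : ∀ t ∈ Icc t₁ T, X t ≠ U t ∧
      HasDerivWithinAt X (2 / (X t - U t)) (Icc t₁ T) t := by
    intro t ht
    exact ⟨(hX t (hsub2 ht)).1.ne', (hX t (hsub2 ht)).2.mono hsub2⟩
  have hXU2 : ∀ t ∈ Icc t₁ T, U t < X t := fun t ht => (hX t (hsub2 ht)).1
  have hUc2 : ContinuousOn U (Icc t₁ T) := hU.mono (Icc_subset_Icc (by linarith) le_rfl)
  have hXlt : X t₁ < z₁ t₁ := by
    have h1 : |X t₁ - U τ| < d := ht₁X
    cases' abs_lt.1 h1 with h2 h3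
    have := (hz₁up t₁ (right_mem_Icc.2 hτt₁.le)).2
    linarith
  obtain ⟨z₂, hz₂0, hz₂gt, hz₂sol⟩ := lw_stay_above ht₁T.le hUc2 hX2 hXU2 hXlt
  -- glue
  have hxy : z₁ t₁ = z₂ t₁ := hz₂0.symm
  have hglue := lw_glue hτt₁.le ht₁T.le hxy hz₁sol hz₂sol
  refine ⟨_, ?_, hglue, ?_⟩
  · simp only [if_pos hτt₁.le, hz₁0]
  · have hTt₁ : ¬ (T ≤ t₁) := not_le.2 ht₁T
    simp only [if_neg hTt₁]
    exact hz₂gt T (right_mem_Icc.2 ht₁T.le)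

/-- Core of the backward direction: assuming the uniform-escape condition, there is a
unique forward solution emanating from `(τ, U τ)` above the driving function. -/
lemma lw_main_above {U : ℝ → ℝ} {T τ : ℝ} (hτ0 : 0 ≤ τ) (hτT : τ < T)
    (hU : ContinuousOn U (Icc 0 T))
    (hB : ∀ τ' ∈ Ico (0:ℝ) T, ∃ ε > 0, ∀ x₀ : ℝ, x₀ ≠ U τ' →
      ∃ x : ℝ → ℝ, x τ' = x₀ ∧
        (∀ t ∈ Icc τ' T, x t ≠ U t ∧ HasDerivWithinAt x (2 / (x t - U t)) (Icc τ' T) t) ∧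
        ε < |x T - U T|) :
    ∃ Z : ℝ → ℝ,
      Tendsto Z (𝓝[>] τ) (𝓝 (U τ)) ∧
      (∀ u ∈ Ioc τ T, U u < Z u ∧ HasDerivWithinAt Z (2 / (Z u - U u)) (Ioc τ T) u) ∧
      U T < Z T ∧
      (∀ x : ℝ → ℝ,
        (∀ u ∈ Ioc τ T, U u < x u ∧ HasDerivWithinAt x (2 / (x u - U u)) (Ioc τ T) u) →
        Tendsto x (𝓝[>] τ) (𝓝 (U τ)) → x T = Z T) := by
  have hUτT : ContinuousOn U (Icc τ T) := hU.mono (Icc_subset_Icc hτ0 le_rfl)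
  obtain ⟨ε, hε0, hsol⟩ := hB τ ⟨hτ0, hτT⟩
  haveI : Nonempty ↥(Ioi (U τ)) := (nonempty_Ioi (a := U τ)).to_subtype
  have hex : ∀ p : ↥(Ioi (U τ)), ∃ x : ℝ → ℝ, x τ = (p : ℝ) ∧
      (∀ t ∈ Icc τ T, x t ≠ U t ∧ HasDerivWithinAt x (2 / (x t - U t)) (Icc τ T) t) ∧
      ε < |x T - U T| := fun p => hsol (p : ℝ) (ne_of_gt p.2)
  choose zf hz1 hz2 hz3 using hex
  -- positivity of each member of the family
  have hzpos : ∀ p, ∀ t ∈ Icc τ T, U t < zf p t := by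
    intro p t ht
    have hsign := lw_sign (f := fun t => zf p t - U t) Set.ordConnected_Icc
      ((lw_cont (fun t ht => (hz2 p t ht).2)).sub hUτT)
      (fun t ht => sub_ne_zero.2 (hz2 p t ht).1)
      (left_mem_Icc.2 hτT.le) ht (show (0:ℝ) < zf p τ - U τ by rw [hz1 p]; exact sub_pos.2 p.2)
    have hsign' : (0:ℝ) < zf p t - U t := hsign
    linarith
  -- monotonicity of the family
  have hmono : ∀ p q : ↥(Ioi (U τ)), (p : ℝ) < (q : ℝ) →
      ∀ t ∈ Icc τ T, zf p t < zf q t := by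
    intro p q hpq t ht
    exact lw_compare hτT.le hUτT (hz2 p) (hz2 q) (by rw [hz1 p, hz1 q]; exact hpq) t ht
  set Z : ℝ → ℝ := fun t => ⨅ p : ↥(Ioi (U τ)), zf p t with hZ
  have hbdd : ∀ t ∈ Icc τ T, BddBelow (range fun p => zf p t) := by
    intro t ht
    exact ⟨U t, fun v ⟨p, hp⟩ => hp ▸ (hzpos p t ht).le⟩
  have hZlb : ∀ t ∈ Icc τ T, U t ≤ Z t := fun t ht => le_ciInf (fun p => (hzpos p t ht).le)
  have hZub : ∀ t ∈ Icc τ T, ∀ p, Z t ≤ zf p t := fun t ht p => ciInf_le (hbdd t ht) p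
  have hZstrict : ∀ t ∈ Icc τ T, ∀ p, Z t < zf p t := by
    intro t ht p
    have hp2 : U τ < (p : ℝ) := p.2
    set q : ↥(Ioi (U τ)) := ⟨(U τ + (p : ℝ)) / 2, by simp only [mem_Ioi]; linarith⟩
    calc Z t ≤ zf q t := hZub t ht q
      _ < zf p t := hmono q p (by simp only [q]; linarith) t ht
  have hZinf : ∀ t ∈ Icc τ T, ∀ η > 0, ∃ p, zf p t < Z t + η := by
    intro t ht η hη
    exact exists_lt_of_ciInf_lt (by linarith : Z t < Z t + η)
  -- no touching of the driving function
  have hpos : ∀ t ∈ Ioc τ T, U t < Z t := by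
    by_contra hcon
    push_neg at hcon
    obtain ⟨t₀, ht₀, ht₀le⟩ := hcon
    have ht₀I : t₀ ∈ Icc τ T := ⟨ht₀.1.le, ht₀.2⟩
    have ht₀eq : Z t₀ = U t₀ := le_antisymm ht₀le (hZlb t₀ ht₀I)
    -- the inf collapses on the whole interval (τ, t₀]
    have hdown : ∀ u ∈ Ioo τ t₀, Z u = U u := by
      intro u hu
      by_contra hne
      have huI : u ∈ Icc τ T := ⟨hu.1.le, hu.2.le.trans ht₀.2⟩
      have hgt : U u < Z u := lt_of_le_of_ne (hZlb u huI) (Ne.symm hne)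
      obtain ⟨ε', hε'0, hsol'⟩ := hB u ⟨le_trans hτ0 hu.1.le, lt_of_lt_of_le hu.2 ht₀.2⟩
      obtain ⟨q, hq0, hqsol, -⟩ := hsol' (Z u) hgt.ne'
      have hsub : Icc u t₀ ⊆ Icc u T := Icc_subset_Icc le_rfl ht₀.2
      have hsubτ : Icc u t₀ ⊆ Icc τ T := Icc_subset_Icc hu.1.le ht₀.2
      have hUcu : ContinuousOn U (Icc u t₀) := hUτT.mono hsubτ
      have hqsol' : ∀ t ∈ Icc u t₀, q t ≠ U t ∧
          HasDerivWithinAt q (2 / (q t - U t)) (Icc u t₀) t :=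
        fun t ht => ⟨(hqsol t (hsub ht)).1, (hqsol t (hsub ht)).2.mono hsub⟩
      have hqsign : U t₀ < q t₀ := by
        have := lw_sign (f := fun t => q t - U t) Set.ordConnected_Icc
          ((lw_cont (fun t ht => (hqsol' t ht).2)).sub hUcu)
          (fun t ht => sub_ne_zero.2 (hqsol' t ht).1)
          (left_mem_Icc.2 hu.2.le) (right_mem_Icc.2 hu.2.le)
          (show (0:ℝ) < q u - U u by rw [hq0]; exact sub_pos.2 hgt)
        have h' : (0:ℝ) < q t₀ - U t₀ := this
        linarith
      have hqlt : ∀ p, q t₀ < zf p t₀ := by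
        intro p
        have hzf' : ∀ t ∈ Icc u t₀, zf p t ≠ U t ∧
            HasDerivWithinAt (zf p) (2 / (zf p t - U t)) (Icc u t₀) t :=
          fun t ht => ⟨(hz2 p t (hsubτ ht)).1, (hz2 p t (hsubτ ht)).2.mono hsubτ⟩
        exact lw_compare hu.2.le hUcu hqsol' hzf'
          (by rw [hq0]; exact hZstrict u huI p) t₀ (right_mem_Icc.2 hu.2.le)
      have : q t₀ ≤ Z t₀ := le_ciInf (fun p => (hqlt p).le)
      rw [ht₀eq] at this
      linarith
    -- quantitative contradiction
    set p₀ : ℝ := (τ + t₀) / 2 with hp₀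
    have hp₀mem : p₀ ∈ Ioo τ t₀ := ⟨by simp only [hp₀]; linarith [ht₀.1],
      by simp only [hp₀]; linarith [ht₀.1]⟩
    have hp₀I : p₀ ∈ Icc τ T := ⟨hp₀mem.1.le, hp₀mem.2.le.trans ht₀.2⟩
    have hZU : ∀ u ∈ Icc p₀ t₀, Z u = U u := by
      intro u hu
      rcases lt_or_eq_of_le hu.2 with h | h
      · exact hdown u ⟨lt_of_lt_of_le hp₀mem.1 hu.1, h⟩
      · rw [h, ht₀eq]
    set K : ℝ := |U t₀ - U p₀| + 1 with hK
    have hK1 : 1 ≤ K := by simp only [hK]; linarith [abs_nonneg (U t₀ - U p₀)]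
    set δ : ℝ := min 1 ((t₀ - p₀) / K) with hδ
    have hδ0 : 0 < δ := lt_min one_pos (div_pos (by linarith [hp₀mem.2]) (by linarith))
    obtain ⟨p, hp⟩ := hZinf p₀ hp₀I δ hδ0
    rw [hZU p₀ (left_mem_Icc.2 hp₀mem.2.le)] at hp
    have hsubp : Icc p₀ t₀ ⊆ Icc τ T := Icc_subset_Icc hp₀mem.1.le ht₀.2
    have hUcp : ContinuousOn U (Icc p₀ t₀) := hUτT.mono hsubp
    -- the chosen solution is uniformly close to U on [p₀, t₀]
    have hbound : ∀ t ∈ Icc p₀ t₀, zf p t ≤ U t + δ := by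
      intro t ht
      have key : ∀ q'' : ↥(Ioi (U τ)), zf p t ≤ zf q'' t + δ := by
        intro q''
        set x' : ↥(Ioi (U τ)) := ⟨(min (q'' : ℝ) (p : ℝ) + U τ) / 2, by
          simp only [mem_Ioi]
          have := q''.2
          have := p.2
          simp only [mem_Ioi] at *
          have : U τ < min (q'' : ℝ) (p : ℝ) := lt_min (by assumption) (by assumption)
          linarith⟩
        have hx'lt : (x' : ℝ) < min (q'' : ℝ) (p : ℝ) := by
          have h1 : U τ < min (q'' : ℝ) (p : ℝ) := lt_min q''.2 p.2
          simp only [x']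
          linarith
        have hx'p : (x' : ℝ) < (p : ℝ) := lt_of_lt_of_le hx'lt (min_le_right _ _)
        have hx'q : (x' : ℝ) < (q'' : ℝ) := lt_of_lt_of_le hx'lt (min_le_left _ _)
        -- contraction from p₀
        have hzf1 : ∀ s ∈ Icc p₀ t₀, zf p s ≠ U s ∧
            HasDerivWithinAt (zf p) (2 / (zf p s - U s)) (Icc p₀ t₀) s :=
          fun s hs => ⟨(hz2 p s (hsubp hs)).1, (hz2 p s (hsubp hs)).2.mono hsubp⟩
        have hzf2 : ∀ s ∈ Icc p₀ t₀, zf x' s ≠ U s ∧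
            HasDerivWithinAt (zf x') (2 / (zf x' s - U s)) (Icc p₀ t₀) s :=
          fun s hs => ⟨(hz2 x' s (hsubp hs)).1, (hz2 x' s (hsubp hs)).2.mono hsubp⟩
        have hcontr := lw_contract hp₀mem.2.le hUcp hzf2 hzf1
          (fun s hs => hzpos x' s (hsubp hs)) (fun s hs => hzpos p s (hsubp hs)) t ht
        have horder : zf x' t < zf p t := hmono x' p hx'p t (hsubp ht)
        have horder0 : zf x' p₀ < zf p p₀ := hmono x' p hx'p p₀ (hsubp (left_mem_Icc.2 hp₀mem.2.le))
        have hx'pos : U p₀ < zf x' p₀ := hzpos x' p₀ hp₀I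
        have h5 : zf p t - zf x' t ≤ zf p p₀ - zf x' p₀ := by
          rw [abs_of_pos (sub_pos.2 horder), abs_of_pos (sub_pos.2 horder0)] at hcontr
          exact hcontr
        have h6 : zf x' t ≤ zf q'' t := le_of_lt (hmono x' q'' hx'q t (hsubp ht))
        linarith
      have h7 : zf p t - δ ≤ Z t := le_ciInf (fun q'' => by linarith [key q''])
      rw [hZU t ht] at h7
      linarith
    -- derivative lower bound gives growth contradiction
    have hlow : ∀ t ∈ Icc p₀ t₀, U t < zf p t := fun t ht => hzpos p t (hsubp ht)
    have hgrow : (2 / δ) * (t₀ - p₀) ≤ zf p t₀ - zf p p₀ := by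
      set w : ℝ → ℝ := fun t => zf p t - (2 / δ) * t with hw
      have hwmono : MonotoneOn w (Icc p₀ t₀) := by
        apply monotoneOn_of_deriv_nonneg (convex_Icc p₀ t₀)
        · exact ((lw_cont (fun s hs => (hz2 p s hs).2)).mono hsubp).sub
            (continuousOn_const.mul continuousOn_id)
        · intro s hs
          rw [interior_Icc] at hs
          have hsI : Icc τ T ∈ 𝓝 s := Icc_mem_nhds (lt_trans hp₀mem.1 hs.1)
            (lt_of_lt_of_le hs.2 ht₀.2)
          have hD : HasDerivAt (zf p) (2 / (zf p s - U s)) s :=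
            ((hz2 p s ⟨(lt_trans hp₀mem.1 hs.1).le, (lt_of_lt_of_le hs.2 ht₀.2).le⟩).2).hasDerivAt hsI
          exact (hD.sub ((hasDerivAt_id s).const_mul (2/δ))).differentiableAt.differentiableWithinAt
        · intro s hs
          rw [interior_Icc] at hs
          have hsmem : s ∈ Icc p₀ t₀ := ⟨hs.1.le, hs.2.le⟩
          have hsI : Icc τ T ∈ 𝓝 s := Icc_mem_nhds (lt_trans hp₀mem.1 hs.1)
            (lt_of_lt_of_le hs.2 ht₀.2)
          have hD : HasDerivAt (zf p) (2 / (zf p s - U s)) s :=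
            ((hz2 p s ⟨(lt_trans hp₀mem.1 hs.1).le, (lt_of_lt_of_le hs.2 ht₀.2).le⟩).2).hasDerivAt hsI
          have hDw : HasDerivAt w (2 / (zf p s - U s) - 2/δ * 1) s :=
            hD.sub ((hasDerivAt_id s).const_mul (2/δ))
          rw [hDw.deriv]
          have h1 : 0 < zf p s - U s := sub_pos.2 (hlow s hsmem)
          have h2 : zf p s - U s ≤ δ := by linarith [hbound s hsmem]
          have h3 : 2 / δ ≤ 2 / (zf p s - U s) := div_le_div_of_nonneg_left (by norm_num) h1 h2
          linarith
      have := hwmono (left_mem_Icc.2 hp₀mem.2.le) (right_mem_Icc.2 hp₀mem.2.le) hp₀mem.2.le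
      simp only [hw] at this
      linarith
    have hfin1 : zf p t₀ - zf p p₀ ≤ |U t₀ - U p₀| + δ := by
      have h1 := hbound t₀ (right_mem_Icc.2 hp₀mem.2.le)
      have h2 := hlow p₀ (left_mem_Icc.2 hp₀mem.2.le)
      have h3 : U t₀ - U p₀ ≤ |U t₀ - U p₀| := le_abs_self _
      linarith
    have hfin2 : 2 * K ≤ (2 / δ) * (t₀ - p₀) := by
      have h1 : δ ≤ (t₀ - p₀) / K := min_le_right _ _
      have h2 : δ * K ≤ t₀ - p₀ := by
        rw [← le_div_iff₀ (by linarith : (0:ℝ) < K)]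
        exact h1
      calc 2 * K = (2 / δ) * (δ * K) := by field_simp
        _ ≤ (2 / δ) * (t₀ - p₀) := by
            apply mul_le_mul_of_nonneg_left h2 (by positivity)
    have hδ1 : δ ≤ 1 := min_le_left _ _
    have : 2 * K ≤ |U t₀ - U p₀| + δ := le_trans hfin2 (le_trans hgrow hfin1)
    simp only [hK] at this
    linarith
  -- Z is a genuine solution on (τ, T]
  have hZeq : ∀ a ∈ Ioo τ T, ∃ q : ℝ → ℝ, (∀ t ∈ Icc a T, q t = Z t) ∧
      (∀ t ∈ Icc a T, q t ≠ U t ∧ HasDerivWithinAt q (2 / (q t - U t)) (Icc a T) t) := by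
    intro a ha
    have haI : a ∈ Icc τ T := ⟨ha.1.le, ha.2.le⟩
    have haIoc : a ∈ Ioc τ T := ⟨ha.1, ha.2.le⟩
    obtain ⟨ε', hε'0, hsol'⟩ := hB a ⟨le_trans hτ0 ha.1.le, ha.2⟩
    obtain ⟨q, hq0, hqsol, -⟩ := hsol' (Z a) (hpos a haIoc).ne'
    have hsubq : Icc a T ⊆ Icc τ T := Icc_subset_Icc ha.1.le le_rfl
    have hUca : ContinuousOn U (Icc a T) := hUτT.mono hsubq
    have hqsign : ∀ t ∈ Icc a T, U t < q t := by
      intro t ht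
      have := lw_sign (f := fun t => q t - U t) Set.ordConnected_Icc
        ((lw_cont (fun s hs => (hqsol s hs).2)).sub hUca)
        (fun s hs => sub_ne_zero.2 (hqsol s hs).1)
        (left_mem_Icc.2 ha.2.le) ht (show (0:ℝ) < q a - U a by rw [hq0]; exact sub_pos.2 (hpos a haIoc))
      have h' : (0:ℝ) < q t - U t := this
      linarith
    have hqlt : ∀ t ∈ Icc a T, ∀ p, q t < zf p t := by
      intro t ht p
      have hzf' : ∀ s ∈ Icc a T, zf p s ≠ U s ∧
          HasDerivWithinAt (zf p) (2 / (zf p s - U s)) (Icc a T) s :=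
        fun s hs => ⟨(hz2 p s (hsubq hs)).1, (hz2 p s (hsubq hs)).2.mono hsubq⟩
      exact lw_compare ha.2.le hUca hqsol hzf'
        (by rw [hq0]; exact hZstrict a haI p) t ht
    have hqeq : ∀ t ∈ Icc a T, q t = Z t := by
      intro t ht
      have hle1 : q t ≤ Z t := le_ciInf (fun p => (hqlt t ht p).le)
      have hle2 : Z t ≤ q t := by
        by_contra hlt
        push_neg at hlt
        set η : ℝ := Z t - q t with hη
        have hη0 : 0 < η := sub_pos.2 hlt
        obtain ⟨p, hp⟩ := hZinf a haI η hη0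
        have hzf' : ∀ s ∈ Icc a T, zf p s ≠ U s ∧
            HasDerivWithinAt (zf p) (2 / (zf p s - U s)) (Icc a T) s :=
          fun s hs => ⟨(hz2 p s (hsubq hs)).1, (hz2 p s (hsubq hs)).2.mono hsubq⟩
        have hcontr := lw_contract ha.2.le hUca hqsol hzf' hqsign
          (fun s hs => hzpos p s (hsubq hs)) t ht
        have h1 : zf p a - q a < η := by rw [hq0]; linarith
        have h2 : q a < zf p a := hqlt a (left_mem_Icc.2 ha.2.le) p
        have h3 : q t < zf p t := hqlt t ht p
        rw [abs_of_pos (sub_pos.2 h3), abs_of_pos (sub_pos.2 h2)] at hcontr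
        have h4 : Z t ≤ zf p t := hZub t (hsubq ht) p
        simp only [hη] at *
        linarith
      linarith
    exact ⟨q, hqeq, hqsol⟩
  have hZsol : ∀ u ∈ Ioc τ T, U u < Z u ∧
      HasDerivWithinAt Z (2 / (Z u - U u)) (Ioc τ T) u := by
    intro u hu
    refine ⟨hpos u hu, ?_⟩
    set a : ℝ := (τ + u) / 2 with ha
    have hamem : a ∈ Ioo τ T := ⟨by simp only [ha]; linarith [hu.1],
      by simp only [ha]; nlinarith [hu.1, hu.2, hτT]⟩
    have hau : a < u := by simp only [ha]; linarith [hu.1]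
    obtain ⟨q, hqeq, hqsol⟩ := hZeq a hamem
    have huIcc : u ∈ Icc a T := ⟨hau.le, hu.2⟩
    have h1 := (hqsol u huIcc).2
    have h2 := h1.congr (fun t ht => (hqeq t ht).symm) (hqeq u huIcc).symm
    rw [hqeq u huIcc] at h2
    apply h2.mono_of_mem_nhdsWithin
    apply mem_nhdsWithin.2 ⟨Ioi a, isOpen_Ioi, hau, ?_⟩
    intro v hv
    exact ⟨hv.1.le, hv.2.2⟩
  -- value at T
  have hZT : U T + ε ≤ Z T := by
    apply le_ciInf
    intro p
    have h1 := hz3 p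
    have h2 : U T < zf p T := hzpos p T (right_mem_Icc.2 hτT.le)
    rw [abs_of_pos (sub_pos.2 h2)] at h1
    linarith
  -- limit at τ
  have hZtendsto : Tendsto Z (𝓝[>] τ) (𝓝 (U τ)) := by
    rw [tendsto_order]
    constructor
    · intro b hb
      have hUmem : Icc τ T ∈ 𝓝[>] τ :=
        mem_nhdsWithin.2 ⟨Iio T, isOpen_Iio, hτT, fun v hv => ⟨hv.2.le, hv.1.le⟩⟩
      have hle : 𝓝[>] τ ≤ 𝓝[Icc τ T] τ := nhdsWithin_le_of_mem hUmem
      have hUcont : Tendsto U (𝓝[Icc τ T] τ) (𝓝 (U τ)) :=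
        (hUτT τ (left_mem_Icc.2 hτT.le)).tendsto
      have hev : ∀ᶠ u in 𝓝[>] τ, b < U u := hle (hUcont (Ioi_mem_nhds hb))
      filter_upwards [hev, hUmem] with u h1 h2
      exact lt_of_lt_of_le h1 (hZlb u h2)
    · intro b hb
      set p : ↥(Ioi (U τ)) := ⟨(U τ + b) / 2, by simp only [mem_Ioi]; linarith⟩
      have hpb : (p : ℝ) < b := by simp only [p]; linarith
      have hUmem : Icc τ T ∈ 𝓝[>] τ :=
        mem_nhdsWithin.2 ⟨Iio T, isOpen_Iio, hτT, fun v hv => ⟨hv.2.le, hv.1.le⟩⟩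
      have hle : 𝓝[>] τ ≤ 𝓝[Icc τ T] τ := nhdsWithin_le_of_mem hUmem
      have hcont : Tendsto (zf p) (𝓝[Icc τ T] τ) (𝓝 ((p : ℝ))) := by
        have := (lw_cont (fun s hs => (hz2 p s hs).2)) τ (left_mem_Icc.2 hτT.le)
        rw [← hz1 p]
        exact this.tendsto
      have hev : ∀ᶠ u in 𝓝[>] τ, zf p u < b := hle (hcont (Iio_mem_nhds hpb))
      filter_upwards [hev, hUmem] with u h1 h2
      exact lt_of_le_of_lt (hZub u h2 p) h1
  -- uniqueness
  refine ⟨Z, hZtendsto, hZsol, by linarith, ?_⟩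
  intro x hxsol hxt
  by_contra hne
  set η : ℝ := |x T - Z T| with hη
  have hη0 : 0 < η := abs_pos.2 (sub_ne_zero.2 hne)
  have hev1 : ∀ᶠ u in 𝓝[>] τ, |x u - U τ| < η / 2 := by
    have := hxt (Metric.ball_mem_nhds (U τ) (show (0:ℝ) < η/2 by linarith))
    filter_upwards [this] with u hu
    simpa [Real.dist_eq] using hu
  have hev2 : ∀ᶠ u in 𝓝[>] τ, |Z u - U τ| < η / 2 := by
    have := hZtendsto (Metric.ball_mem_nhds (U τ) (show (0:ℝ) < η/2 by linarith))
    filter_upwards [this] with u hu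
    simpa [Real.dist_eq] using hu
  have hev3 : Ioo τ T ∈ 𝓝[>] τ := Ioo_mem_nhdsGT_of_mem ⟨le_refl τ, hτT⟩
  obtain ⟨a, ha1, ha2, ha3⟩ := (hev1.and (hev2.and (eventually_of_mem hev3 (fun u hu => hu)))).exists
  have hsuba : Icc a T ⊆ Ioc τ T := fun v hv => ⟨lt_of_lt_of_le ha3.1 hv.1, hv.2⟩
  have hUca : ContinuousOn U (Icc a T) := hUτT.mono (Icc_subset_Icc ha3.1.le le_rfl)
  have hxsol' : ∀ t ∈ Icc a T, x t ≠ U t ∧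
      HasDerivWithinAt x (2 / (x t - U t)) (Icc a T) t :=
    fun t ht => ⟨(hxsol t (hsuba ht)).1.ne', (hxsol t (hsuba ht)).2.mono hsuba⟩
  have hZsol' : ∀ t ∈ Icc a T, Z t ≠ U t ∧
      HasDerivWithinAt Z (2 / (Z t - U t)) (Icc a T) t :=
    fun t ht => ⟨(hZsol t (hsuba ht)).1.ne', (hZsol t (hsuba ht)).2.mono hsuba⟩
  have hcontr := lw_contract ha3.2.le hUca hxsol' hZsol'
    (fun t ht => (hxsol t (hsuba ht)).1) (fun t ht => (hZsol t (hsuba ht)).1)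
    T (right_mem_Icc.2 ha3.2.le)
  have h1 : |Z a - x a| < η := by
    have := abs_sub_abs_le_abs_sub (Z a - U τ) (x a - U τ)
    have h2 := abs_sub (Z a - U τ) (x a - U τ)
    calc |Z a - x a| = |(Z a - U τ) - (x a - U τ)| := by ring_nf
      _ ≤ |Z a - U τ| + |x a - U τ| := abs_sub _ _
      _ < η := by linarith
  have h2 : |Z T - x T| = η := by rw [hη, abs_sub_comm]
  linarith

/-- Negation transport for solutions. -/
lemma lw_neg_sol {U : ℝ → ℝ} {s : Set ℝ} {x : ℝ → ℝ}
    (hx : ∀ t ∈ s, x t ≠ U t ∧ HasDerivWithinAt x (2 / (x t - U t)) s t) :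
    ∀ t ∈ s, -(x t) ≠ -(U t) ∧
      HasDerivWithinAt (fun u => -(x u)) (2 / (-(x t) - -(U t))) s t := by
  intro t ht
  refine ⟨by simp [(hx t ht).1], ?_⟩
  have h := (hx t ht).2.neg
  refine HasDerivWithinAt.congr_deriv h ?_
  have h1 : -(x t) - -(U t) = -(x t - U t) := by ring
  rw [h1, div_neg]

/-- Time reversal: an emanating forward solution gives a backward solution hitting the
singularity. -/
lemma lw_reverse_to_backward {U : ℝ → ℝ} {T s : ℝ} (hs : s ∈ Ioc 0 T) {W : ℝ → ℝ}
    (hW : ∀ u ∈ Ioc (T - s) T, W u ≠ U u ∧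
      HasDerivWithinAt W (2 / (W u - U u)) (Ioc (T - s) T) u)
    (hWt : Tendsto W (𝓝[>] (T - s)) (𝓝 (U (T - s)))) :
    IsBackwardSol U T s (fun t => W (T - t)) ∧ HitsSingularity U T s (fun t => W (T - t)) := by
  constructor
  · intro t ht
    have hu : T - t ∈ Ioc (T - s) T := ⟨by linarith [ht.2], by linarith [ht.1]⟩
    refine ⟨(hW (T - t) hu).1, ?_⟩
    have hinner : HasDerivWithinAt (fun t : ℝ => T - t) (-1) (Ico 0 s) t := by
      simpa using (hasDerivWithinAt_id t (Ico (0:ℝ) s)).const_sub T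
    have hmaps : MapsTo (fun t : ℝ => T - t) (Ico 0 s) (Ioc (T - s) T) := by
      intro v hv
      simp only [mem_Ico] at hv
      simp only [mem_Ioc]
      constructor <;> [skip; skip] <;> [linarith [hv.2]; linarith [hv.1]]
    have hcomp := ((hW (T - t) hu).2).comp t hinner hmaps
    refine HasDerivWithinAt.congr_deriv hcomp ?_
    rw [mul_neg_one, neg_div]
  · have hmap : Tendsto (fun t : ℝ => T - t) (𝓝[<] s) (𝓝[>] (T - s)) := by
      rw [tendsto_nhdsWithin_iff]
      constructor
      · have h1 : Continuous (fun t : ℝ => T - t) := continuous_const.sub continuous_id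
        exact (h1.tendsto s).mono_left nhdsWithin_le_nhds
      · filter_upwards [self_mem_nhdsWithin] with v hv
        simp only [mem_Iio] at hv
        simp only [mem_Ioi]
        linarith
    exact hWt.comp hmap

/-- Time reversal: a backward solution hitting the singularity gives an emanating forward
solution. -/
lemma lw_reverse_to_forward {U : ℝ → ℝ} {T s : ℝ} (hs : s ∈ Ioc 0 T) {y : ℝ → ℝ}
    (hy : IsBackwardSol U T s y) (hyt : HitsSingularity U T s y) :
    (∀ u ∈ Ioc (T - s) T, y (T - u) ≠ U u ∧
      HasDerivWithinAt (fun u => y (T - u)) (2 / (y (T - u) - U u)) (Ioc (T - s) T) u) ∧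
    Tendsto (fun u => y (T - u)) (𝓝[>] (T - s)) (𝓝 (U (T - s))) := by
  constructor
  · intro u hu
    have ht : T - u ∈ Ico 0 s := ⟨by linarith [hu.2], by linarith [hu.1]⟩
    have hne := (hy (T - u) ht).1
    rw [sub_sub_cancel] at hne
    refine ⟨hne, ?_⟩
    have hinner : HasDerivWithinAt (fun u : ℝ => T - u) (-1) (Ioc (T - s) T) u := by
      simpa using (hasDerivWithinAt_id u (Ioc (T - s) T)).const_sub T
    have hmaps : MapsTo (fun u : ℝ => T - u) (Ioc (T - s) T) (Ico 0 s) := by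
      intro v hv
      simp only [mem_Ioc] at hv
      simp only [mem_Ico]
      constructor <;> [skip; skip] <;> [linarith [hv.2]; linarith [hv.1]]
    have houter := (hy (T - u) ht).2
    have hcomp := houter.comp u hinner hmaps
    refine HasDerivWithinAt.congr_deriv hcomp ?_
    rw [sub_sub_cancel]
    rw [mul_neg_one, neg_div, neg_neg]
  · have hmap : Tendsto (fun u : ℝ => T - u) (𝓝[>] (T - s)) (𝓝[<] s) := by
      rw [tendsto_nhdsWithin_iff]
      constructor
      · have h1 : Continuous (fun u : ℝ => T - u) := continuous_const.sub continuous_id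
        have h2 := h1.tendsto (T - s)
        rw [sub_sub_cancel] at h2
        exact h2.mono_left nhdsWithin_le_nhds
      · filter_upwards [self_mem_nhdsWithin] with v hv
        simp only [mem_Ioi] at hv
        simp only [mem_Iio]
        linarith
    have := hyt.comp hmap
    exact this

/-- Un-negation transport. -/
lemma lw_unneg_sol {U : ℝ → ℝ} {s : Set ℝ} {x : ℝ → ℝ}
    (hx : ∀ t ∈ s, x t ≠ -U t ∧ HasDerivWithinAt x (2 / (x t - -U t)) s t) :
    ∀ t ∈ s, -(x t) ≠ U t ∧ HasDerivWithinAt (fun u => -(x u)) (2 / (-(x t) - U t)) s t := by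
  intro t ht
  have h := lw_neg_sol (U := fun v => -U v) hx t ht
  simp only [neg_neg] at h
  exact h

/-- `U` is welded on `[0,T]` if and only if for every `τ ∈ [0,T)`
there is `ε > 0` such that every forward solution started at time `τ` from a point
`x₀ ≠ U τ` exists up to time `T`, never hits the driving function, and satisfies
`|x T − U T| > ε`. -/
theorem stmt_2 (T : ℝ) (hT : 0 < T) (U : ℝ → ℝ) (hU : ContinuousOn U (Set.Icc 0 T)) :
    Welded U T ↔
    ∀ τ ∈ Set.Ico (0 : ℝ) T, ∃ ε > 0, ∀ x₀ : ℝ, x₀ ≠ U τ →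
      ∃ x : ℝ → ℝ, x τ = x₀ ∧
        (∀ t ∈ Set.Icc τ T, x t ≠ U t ∧
          HasDerivWithinAt x (2 / (x t - U t)) (Set.Icc τ T) t) ∧
        ε < |x T - U T| := by
  constructor
  · -- Welded implies the uniform escape condition
    intro hW τ hτ
    have hτ0 : 0 ≤ τ := hτ.1
    have hτT : τ < T := hτ.2
    have hsmem : T - τ ∈ Ioc 0 T := ⟨by linarith, by linarith⟩
    obtain ⟨x₀, y₀, hx₀U, hy₀U, hset⟩ := hW (T - τ) hsmem
    have hy₀mem : y₀ ∈ {a : ℝ | ∃ x : ℝ → ℝ, x 0 = a ∧ IsBackwardSol U T (T - τ) x ∧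
        HitsSingularity U T (T - τ) x} := by rw [hset]; simp
    have hx₀mem : x₀ ∈ {a : ℝ | ∃ x : ℝ → ℝ, x 0 = a ∧ IsBackwardSol U T (T - τ) x ∧
        HitsSingularity U T (T - τ) x} := by rw [hset]; simp
    obtain ⟨yb, hyb0, hybS, hybH⟩ := hy₀mem
    obtain ⟨xb, hxb0, hxbS, hxbH⟩ := hx₀mem
    obtain ⟨hXp, hXpt⟩ := lw_reverse_to_forward hsmem hybS hybH
    obtain ⟨hXm, hXmt⟩ := lw_reverse_to_forward hsmem hxbS hxbH
    rw [sub_sub_cancel] at hXp hXpt hXm hXmt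
    have hXpT : yb (T - T) = y₀ := by rw [sub_self]; exact hyb0
    have hXmT : xb (T - T) = x₀ := by rw [sub_self]; exact hxb0
    have hUIoc : ContinuousOn U (Ioc τ T) := hU.mono (fun v hv => ⟨le_trans hτ0 hv.1.le, hv.2⟩)
    have hXppos : ∀ u ∈ Ioc τ T, U u < yb (T - u) := by
      intro u hu
      have := lw_sign (f := fun u => yb (T - u) - U u) Set.ordConnected_Ioc
        ((lw_cont (fun v hv => (hXp v hv).2)).sub hUIoc)
        (fun v hv => sub_ne_zero.2 (hXp v hv).1)
        (right_mem_Ioc.2 hτT) hu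
        (show (0:ℝ) < yb (T - T) - U T by rw [hXpT]; linarith)
      have h' : (0:ℝ) < yb (T - u) - U u := this
      linarith
    have hXmneg : ∀ u ∈ Ioc τ T, xb (T - u) < U u := by
      intro u hu
      have := lw_sign (f := fun u => U u - xb (T - u)) Set.ordConnected_Ioc
        (hUIoc.sub (lw_cont (fun v hv => (hXm v hv).2)))
        (fun v hv => sub_ne_zero.2 (Ne.symm (hXm v hv).1))
        (right_mem_Ioc.2 hτT) hu
        (show (0:ℝ) < U T - xb (T - T) by rw [hXmT]; linarith)
      have h' : (0:ℝ) < U u - xb (T - u) := this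
      linarith
    set ε : ℝ := min (y₀ - U T) (U T - x₀) / 2 with hε
    have hε0 : 0 < ε := by
      have h1 : 0 < y₀ - U T := by linarith
      have h2 : 0 < U T - x₀ := by linarith
      have : 0 < min (y₀ - U T) (U T - x₀) := lt_min h1 h2
      simp only [hε]
      linarith
    refine ⟨ε, hε0, ?_⟩
    intro x₀' hx₀'
    rcases lt_or_gt_of_ne hx₀' with hlt | hgt
    · -- start below the driving function: transport by negation
      have hXm'sol : ∀ u ∈ Ioc τ T, (fun v => -U v) u < -(xb (T - u)) ∧
          HasDerivWithinAt (fun v => -(xb (T - v)))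
            (2 / (-(xb (T - u)) - (fun v => -U v) u)) (Ioc τ T) u := by
        intro u hu
        refine ⟨by simpa using (hXmneg u hu), (lw_neg_sol hXm u hu).2⟩
      have hXm't : Tendsto (fun v => -(xb (T - v))) (𝓝[>] τ) (𝓝 ((fun v => -U v) τ)) :=
        hXmt.neg
      obtain ⟨zb, hzb0, hzbsol, hzbT⟩ := lw_forward_above (U := fun v => -U v) hτ0 hτT
        hU.neg hXm'sol hXm't (show -U τ < -x₀' by linarith)
      refine ⟨fun u => -(zb u), show -(zb τ) = x₀' by rw [hzb0]; ring, lw_unneg_sol hzbsol, ?_⟩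
      have h1 : zb T > -(xb (T - T)) := hzbT
      rw [hXmT] at h1
      have h2 : -(zb T) < x₀ := by linarith
      rw [abs_of_neg (by linarith : -(zb T) - U T < 0)]
      have h3 : min (y₀ - U T) (U T - x₀) ≤ U T - x₀ := min_le_right _ _
      simp only [hε]
      linarith
    · -- start above the driving function
      obtain ⟨z, hz0, hzsol, hzT⟩ := lw_forward_above hτ0 hτT hU
        (fun u hu => ⟨hXppos u hu, (hXp u hu).2⟩) hXpt hgt
      refine ⟨z, hz0, hzsol, ?_⟩
      rw [hXpT] at hzT
      rw [abs_of_pos (by linarith : 0 < z T - U T)]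
      have h3 : min (y₀ - U T) (U T - x₀) ≤ y₀ - U T := min_le_left _ _
      simp only [hε]
      linarith
  · -- the uniform escape condition implies weldedness
    intro hB s hs
    have hτ0 : 0 ≤ T - s := by linarith [hs.2]
    have hτT : T - s < T := by linarith [hs.1]
    obtain ⟨Zp, hZpt, hZpsol, hZpT, hZpuniq⟩ := lw_main_above hτ0 hτT hU hB
    have hBN : ∀ τ' ∈ Ico (0:ℝ) T, ∃ ε > 0, ∀ x₀ : ℝ, x₀ ≠ (fun v => -U v) τ' →
        ∃ x : ℝ → ℝ, x τ' = x₀ ∧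
          (∀ t ∈ Icc τ' T, x t ≠ (fun v => -U v) t ∧
            HasDerivWithinAt x (2 / (x t - (fun v => -U v) t)) (Icc τ' T) t) ∧
          ε < |x T - (fun v => -U v) T| := by
      intro τ' hτ'
      obtain ⟨ε, hε, h⟩ := hB τ' hτ'
      refine ⟨ε, hε, ?_⟩
      intro x₀ hx₀
      have hx₀' : -x₀ ≠ U τ' := by
        intro hc
        exact hx₀ (show x₀ = -U τ' by linarith)
      obtain ⟨x, h1, h2, h3⟩ := h (-x₀) hx₀'
      refine ⟨fun u => -(x u), show -(x τ') = x₀ by rw [h1]; ring, lw_neg_sol h2, ?_⟩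
      show ε < |-(x T) - -U T|
      have heq : -(x T) - -U T = -(x T - U T) := by ring
      rw [heq, abs_neg]
      exact h3
    obtain ⟨Zm, hZmt, hZmsol, hZmT, hZmuniq⟩ := lw_main_above (U := fun v => -U v)
      hτ0 hτT hU.neg hBN
    refine ⟨-(Zm T), Zp T, by simpa using neg_lt_neg hZmT, hZpT, ?_⟩
    ext a
    simp only [mem_setOf_eq, mem_insert_iff, mem_singleton_iff]
    constructor
    · rintro ⟨y, hy0, hyS, hyH⟩
      obtain ⟨hfwd, hften⟩ := lw_reverse_to_forward hs hyS hyH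
      have hneT : y 0 ≠ U T := by
        have := (hyS 0 ⟨le_refl 0, hs.1⟩).1
        rwa [sub_zero] at this
      have hUIoc : ContinuousOn U (Ioc (T - s) T) :=
        hU.mono (fun v hv => ⟨le_trans hτ0 hv.1.le, hv.2⟩)
      rcases lt_or_gt_of_ne hneT with hylt | hygt
      · -- hits from below
        left
        have hsign : ∀ u ∈ Ioc (T - s) T, y (T - u) < U u := by
          intro u hu
          have := lw_sign (f := fun u => U u - y (T - u)) Set.ordConnected_Ioc
            (hUIoc.sub (lw_cont (fun v hv => (hfwd v hv).2)))
            (fun v hv => sub_ne_zero.2 (Ne.symm (hfwd v hv).1))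
            (right_mem_Ioc.2 hτT) hu
            (show (0:ℝ) < U T - y (T - T) by rw [sub_self]; linarith)
          have h' : (0:ℝ) < U u - y (T - u) := this
          linarith
        have hnegsol : ∀ u ∈ Ioc (T - s) T, (fun v => -U v) u < -(y (T - u)) ∧
            HasDerivWithinAt (fun v => -(y (T - v)))
              (2 / (-(y (T - u)) - (fun v => -U v) u)) (Ioc (T - s) T) u := by
          intro u hu
          exact ⟨by simpa using hsign u hu, (lw_neg_sol hfwd u hu).2⟩
        have := hZmuniq (fun v => -(y (T - v))) hnegsol hften.neg
        have h2 : -(y (T - T)) = Zm T := this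
        rw [sub_self] at h2
        rw [hy0] at h2
        linarith
      · -- hits from above
        right
        have hsign : ∀ u ∈ Ioc (T - s) T, U u < y (T - u) := by
          intro u hu
          have := lw_sign (f := fun u => y (T - u) - U u) Set.ordConnected_Ioc
            ((lw_cont (fun v hv => (hfwd v hv).2)).sub hUIoc)
            (fun v hv => sub_ne_zero.2 (hfwd v hv).1)
            (right_mem_Ioc.2 hτT) hu
            (show (0:ℝ) < y (T - T) - U T by rw [sub_self]; linarith)
          have h' : (0:ℝ) < y (T - u) - U u := this
          linarith
        have := hZpuniq (fun v => y (T - v)) (fun u hu => ⟨hsign u hu, (hfwd u hu).2⟩) hften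
        have h2 : y (T - T) = Zp T := this
        rw [sub_self] at h2
        rw [hy0] at h2
        exact h2
    · rintro (ha | ha)
      · -- a = -(Zm T)
        have hWsol : ∀ u ∈ Ioc (T - s) T, -(Zm u) ≠ U u ∧
            HasDerivWithinAt (fun v => -(Zm v)) (2 / (-(Zm u) - U u)) (Ioc (T - s) T) u :=
          lw_unneg_sol (fun u hu => ⟨(hZmsol u hu).1.ne', (hZmsol u hu).2⟩)
        have hWt : Tendsto (fun v => -(Zm v)) (𝓝[>] (T - s)) (𝓝 (U (T - s))) := by
          have := hZmt.neg
          simpa using this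
        obtain ⟨hbS, hbH⟩ := lw_reverse_to_backward hs hWsol hWt
        refine ⟨fun t => -(Zm (T - t)), ?_, hbS, hbH⟩
        show -(Zm (T - 0)) = a
        rw [sub_zero, ha]
      · -- a = Zp T
        obtain ⟨hbS, hbH⟩ := lw_reverse_to_backward hs
          (fun u hu => ⟨(hZpsol u hu).1.ne', (hZpsol u hu).2⟩) hZpt
        refine ⟨fun t => Zp (T - t), ?_, hbS, hbH⟩
        show Zp (T - 0) = a
        rw [sub_zero, ha]
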